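/- arXiv:2002.03668 — 3 statements merged into one kernel-verified Lean document; each statement's English description precedes it below -/
import Mathlib

section
/- Let A be a deterministic finite automaton with m states over alphabet Σ, let u ∈ Σ*, v ∈ Σ⁺, and let i ≤ |u|. If there exists j > |u| such that A accepts the finite word (uv^ω)[i,j), then there exists k with |u| ≤ k ≤ |u| + m·|v| such that A accepts (uv^ω)[i,k) and k ≡ j (mod |v|). -/
def upWord {A : Type*} (u v : List A) (hv : v ≠ []) : ℕ → A :=
  fun n =>
    if h : n < u.length then u.get ⟨n, h⟩
    else v.get ⟨(n - u.length) % v.length, Nat.mod_lt _ (List.length_pos_iff.mpr hv)⟩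

def suffix {A : Type*} (w : ℕ → A) (i : ℕ) : ℕ → A := fun n => w (i + n)

def wordInfix {A : Type*} (w : ℕ → A) (i j : ℕ) : List A :=
  (List.range (j - i)).map fun n => w (i + n)

lemma upWord_add {A : Type*} (u v : List A) (hv : v ≠ []) (c : ℕ) :
    upWord u v hv (u.length + c)
      = v.get ⟨c % v.length, Nat.mod_lt _ (List.length_pos_iff.mpr hv)⟩ := by
  unfold upWord
  rw [dif_neg (by omega)]
  congr 1
  ext
  simp

lemma wordInfix_append {A : Type*} (w : ℕ → A) {i a b : ℕ} (h1 : i ≤ a) (h2 : a ≤ b) :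
    wordInfix w i b = wordInfix w i a ++ wordInfix w a b := by
  unfold wordInfix
  have hb : b - i = (a - i) + (b - a) := by omega
  rw [hb, List.range_add, List.map_append, List.map_map]
  congr 1
  apply List.map_congr_left
  intro n _
  simp only [Function.comp_apply]
  congr 1
  omega

lemma wordInfix_block {A : Type*} (u v : List A) (hv : v ≠ []) (t : ℕ) :
    wordInfix (upWord u v hv) (u.length + t * v.length) (u.length + t * v.length + v.length)
      = v := by
  apply List.ext_getElem
  · simp [wordInfix]
  intro n h1 h2
  simp only [wordInfix, Nat.add_sub_cancel_left, List.getElem_map, List.getElem_range] at h1 ⊢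
  rw [add_assoc, upWord_add]
  simp only [List.get_eq_getElem]
  congr 1
  rw [Nat.mul_comm, Nat.mul_add_mod, Nat.mod_eq_of_lt (by simpa using h1)]

lemma wordInfix_tail {A : Type*} (u v : List A) (hv : v ≠ []) (t r : ℕ) :
    wordInfix (upWord u v hv) (u.length + t * v.length) (u.length + t * v.length + r)
      = wordInfix (upWord u v hv) u.length (u.length + r) := by
  unfold wordInfix
  simp only [Nat.add_sub_cancel_left]
  apply List.map_congr_left
  intro n _
  rw [add_assoc, upWord_add, upWord_add]
  have hidx : (t * v.length + n) % v.length = n % v.length := by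
    rw [Nat.mul_comm, Nat.mul_add_mod]
  simp only [List.get_eq_getElem, hidx]

theorem dfa_accept_bounded {A σ : Type*} [Fintype σ] (M : DFA A σ) (m : ℕ)
    (hm : Fintype.card σ = m) (u v : List A) (hv : v ≠ []) (i : ℕ) (hi : i ≤ u.length)
    (j : ℕ) (hj : u.length < j)
    (hacc : wordInfix (upWord u v hv) i j ∈ M.accepts) :
    ∃ k, u.length ≤ k ∧ k ≤ u.length + m * v.length ∧
      wordInfix (upWord u v hv) i k ∈ M.accepts ∧ k % v.length = j % v.length := by
  set W := upWord u v hv with hW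
  have hL : 0 < v.length := List.length_pos_iff.mpr hv
  have hm1 : 0 < m := by rw [← hm]; exact Fintype.card_pos_iff.mpr ⟨M.start⟩
  set Q : ℕ → σ := fun t => M.eval (wordInfix W i (u.length + t * v.length)) with hQ
  -- step fact
  have stepQ : ∀ t, Q (t + 1) = M.evalFrom (Q t) v := by
    intro t
    have hsplit : wordInfix W i (u.length + (t + 1) * v.length)
        = wordInfix W i (u.length + t * v.length)
          ++ wordInfix W (u.length + t * v.length) (u.length + t * v.length + v.length) := by
      have : u.length + (t + 1) * v.length = u.length + t * v.length + v.length := by ring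
      rw [this]
      exact wordInfix_append W (by omega) (by omega)
    simp only [hQ, hsplit, wordInfix_block u v hv t]
    rw [hW, wordInfix_block u v hv t]
    exact M.evalFrom_of_append M.start _ v
  have shiftQ : ∀ a b, Q a = Q b → ∀ n, Q (a + n) = Q (b + n) := by
    intro a b hab n
    induction n with
    | zero => simpa using hab
    | succ n ih =>
        rw [show a + (n+1) = (a + n) + 1 by ring, show b + (n+1) = (b + n) + 1 by ring,
          stepQ, stepQ, ih]
  -- pigeonhole
  obtain ⟨s, t, hst, hQst⟩ : ∃ s t, s < t ∧ t ≤ m ∧ Q s = Q t := by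
    have hcard : Fintype.card σ < Fintype.card (Fin (m + 1)) := by simp [hm]
    obtain ⟨x, y, hxy, hQxy⟩ := Fintype.exists_ne_map_eq_of_card_lt (fun n : Fin (m+1) => Q n) hcard
    rcases lt_or_gt_of_ne (fun h => hxy (Fin.ext h)) with h | h
    · exact ⟨x, y, h, by omega, hQxy⟩
    · exact ⟨y, x, h, by omega, hQxy.symm⟩
  obtain ⟨htm, hQst⟩ := hQst
  -- reduction
  have reduce : ∀ c, ∃ c' < m, Q c' = Q c := by
    intro c
    induction c using Nat.strong_induction_on with
    | _ c ih =>
      by_cases hc : c < m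
      · exact ⟨c, hc, rfl⟩
      · have hct : t ≤ c := by omega
        have h1 : Q (s + (c - t)) = Q c := by
          rw [shiftQ s t hQst (c - t)]
          congr 1
          omega
        obtain ⟨c', hc', hQc'⟩ := ih (s + (c - t)) (by omega)
        exact ⟨c', hc', hQc'.trans h1⟩
  -- decompose j
  set L := v.length with hLdef
  set r := (j - u.length) % L with hr
  set qd := (j - u.length) / L with hqd
  have hrL : r < L := Nat.mod_lt _ hL
  have hjdec : j = u.length + qd * L + r := by
    have hd : L * qd + r = j - u.length := Nat.div_add_mod _ _
    rw [Nat.mul_comm] at hd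
    omega
  obtain ⟨q', hq'm, hQq'⟩ := reduce qd
  refine ⟨u.length + q' * L + r, by omega, ?_, ?_, ?_⟩
  · -- bound
    have : q' * L + L ≤ m * L := by
      calc q' * L + L = (q' + 1) * L := by ring
        _ ≤ m * L := Nat.mul_le_mul_right L (by omega)
    omega
  · -- accepted
    have keyeval : ∀ z, M.eval (wordInfix W i (u.length + z * L + r))
        = M.evalFrom (Q z) (wordInfix W u.length (u.length + r)) := by
      intro z
      rw [wordInfix_append W (show i ≤ u.length + z * L by omega) (by omega),
        wordInfix_tail u v hv z r]
      exact M.evalFrom_of_append M.start _ _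
    rw [DFA.mem_accepts] at hacc ⊢
    rw [hjdec] at hacc
    rw [keyeval q', hQq', ← keyeval qd]
    exact hacc
  · -- mod
    have hz : ∀ z : ℕ, (u.length + z * L + r) % L = (u.length + r) % L := by
      intro z
      rw [show u.length + z * L + r = u.length + r + z * L by ring, Nat.add_mul_mod_self_right]
    rw [hjdec, hz, hz]
end

section
/- Let A be a DFA with m states over alphabet Σ, u ∈ Σ*, v ∈ Σ⁺, and b = m+1. For any PSL-like semantics, the following 'trigger' condition holds: for all i < |uv|, we have [for all j > i, if A accepts (uv^ω)[i,j) then P(j−1)] if and only if [for all j with i < j ≤ |u| + b·|v|, if A accepts (uv^ω)[i,j) then P(j−1)], provided that P is periodic in the sense that P(x) ↔ P(y) whenever x, y ≥ |u| and x ≡ y (mod |v|). -/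
lemma upWord_congr {A : Type*} (u v : List A) (hv : v ≠ []) (p q : ℕ)
    (hp : u.length ≤ p) (hq : u.length ≤ q) (hpq : p % v.length = q % v.length) :
    upWord u v hv p = upWord u v hv q := by
  unfold upWord
  rw [dif_neg (by omega), dif_neg (by omega)]
  congr 1
  have h1 : p = u.length + (p - u.length) := by omega
  have h2 : q = u.length + (q - u.length) := by omega
  have : (u.length + (p - u.length)) % v.length = (u.length + (q - u.length)) % v.length := by
    rw [← h1, ← h2]; exact hpq
  have := Nat.ModEq.add_left_cancel' u.length (this : Nat.ModEq _ _ _)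
  simpa [Nat.ModEq] using this

lemma wordInfix_succ {A : Type*} (w : ℕ → A) (i j : ℕ) (h : i ≤ j) :
    wordInfix w i (j + 1) = wordInfix w i j ++ [w j] := by
  unfold wordInfix
  rw [show j + 1 - i = (j - i) + 1 by omega, List.range_succ, List.map_append]
  simp [Nat.add_sub_cancel' h]

theorem trigger_unrolling_bound {A σ : Type*} [Fintype σ] (M : DFA A σ) (m b : ℕ)
    (hm : Fintype.card σ = m) (hb : b = m + 1) (u v : List A) (hv : v ≠ [])
    (P : ℕ → Prop)
    (hper : ∀ x y, u.length ≤ x → u.length ≤ y → x % v.length = y % v.length → (P x ↔ P y))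
    (i : ℕ) (hi : i < u.length + v.length) :
    (∀ j, i < j → wordInfix (upWord u v hv) i j ∈ M.accepts → P (j - 1)) ↔
      (∀ j, i < j → j ≤ u.length + b * v.length →
        wordInfix (upWord u v hv) i j ∈ M.accepts → P (j - 1)) := by
  set w := upWord u v hv with hw
  set L := u.length
  set n := v.length
  have hn : 0 < n := List.length_pos_iff.mpr hv
  set s : ℕ → σ := fun p => M.evalFrom M.start (wordInfix w i p) with hs
  have hstep : ∀ j, i ≤ j → s (j + 1) = M.step (s j) (w j) := by
    intro j hij
    simp only [hs]
    rw [wordInfix_succ w i j hij, DFA.evalFrom_append_singleton]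
  have hcong : ∀ p q, i ≤ p → i ≤ q → L ≤ p → L ≤ q → p % n = q % n → s p = s q →
      ∀ t, s (p + t) = s (q + t) := by
    intro p q hip hiq hLp hLq hpq hspq t
    induction t with
    | zero => simpa using hspq
    | succ t ih =>
        rw [show p + (t+1) = (p + t) + 1 by omega, show q + (t+1) = (q + t) + 1 by omega,
          hstep _ (by omega), hstep _ (by omega), ih]
        congr 1
        exact upWord_congr u v hv (p + t) (q + t) (by omega) (by omega)
          (by rw [Nat.add_mod, hpq, ← Nat.add_mod])
  constructor
  · intro h j hij _ hacc; exact h j hij hacc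
  · intro h j hij hacc
    induction j using Nat.strong_induction_on with
    | _ j ih =>
      by_cases hle : j ≤ L + b * n
      · exact h j hij hle hacc
      · push_neg at hle
        rw [hb] at hle
        -- pigeonhole among positions j - k*n, k = 0..m
        have hcard : Fintype.card σ < Fintype.card (Fin (m + 1)) := by simp [hm]
        obtain ⟨k1, k2, hne, hfeq⟩ :=
          Fintype.exists_ne_map_eq_of_card_lt (fun k : Fin (m+1) => s (j - k.val * n)) hcard
        wlog hlt : (k1 : ℕ) < (k2 : ℕ) generalizing k1 k2
        · exact this k2 k1 hne.symm hfeq.symm (by have : (k1:ℕ) ≠ (k2:ℕ) := fun hh => hne (Fin.ext hh); omega)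
        · have hk2 : (k2 : ℕ) ≤ m := by omega
          have hk1n : (k1 : ℕ) * n ≤ (k2 : ℕ) * n := Nat.mul_le_mul_right n (le_of_lt hlt)
          have hk2nle : (k2 : ℕ) * n ≤ m * n := Nat.mul_le_mul_right n hk2
          have hjbig : L + (m + 1) * n < j := hle
          have hmn : L + n + m * n ≤ j := by
            have : (m + 1) * n = m * n + n := by ring
            omega
          -- j' := j - (k2 - k1) * n
          have hsub : ((k2 : ℕ) - k1) * n = (k2 : ℕ) * n - (k1 : ℕ) * n := Nat.sub_mul _ _ _
          set j' := j - ((k2 : ℕ) - k1) * n with hj'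
          have hj'lt : j' < j := by
            have : 0 < ((k2 : ℕ) - k1) * n := Nat.mul_pos (by omega) hn
            omega
          have hj'gt : L + n ≤ j' := by omega
          have hkey : s j' = s j := by
            have := hcong (j - (k2 : ℕ) * n) (j - (k1 : ℕ) * n)
              (by omega) (by omega) (by omega) (by omega)
              (by
                have h1 : j - (k2 : ℕ) * n + (k2 : ℕ) * n = j := by omega
                have h2 : j - (k1 : ℕ) * n + (k1 : ℕ) * n = j := by omega
                have e1 : (j - (k2 : ℕ) * n) % n = j % n := by
                  conv_rhs => rw [← h1]
                  rw [Nat.add_mul_mod_self_right]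
                have e2 : (j - (k1 : ℕ) * n) % n = j % n := by
                  conv_rhs => rw [← h2]
                  rw [Nat.add_mul_mod_self_right]
                rw [e1, e2])
              hfeq.symm ((k1 : ℕ) * n)
            have e3 : j - (k2 : ℕ) * n + (k1 : ℕ) * n = j' := by omega
            have e4 : j - (k1 : ℕ) * n + (k1 : ℕ) * n = j := by omega
            rw [e3, e4] at this
            exact this
          have hacc' : wordInfix w i j' ∈ M.accepts := by
            rw [DFA.mem_accepts] at hacc ⊢
            have : M.eval (wordInfix w i j') = s j' := rfl
            rw [this, hkey]
            exact hacc
          have hP' : P (j' - 1) := ih j' hj'lt (by omega) hacc'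
          refine (hper (j' - 1) (j - 1) (by omega) (by omega) ?_).mp hP'
          have : j' - 1 + ((k2 : ℕ) - k1) * n = j - 1 := by omega
          calc (j' - 1) % n = (j' - 1 + ((k2 : ℕ) - k1) * n) % n := by
                rw [Nat.add_mul_mod_self_right]
            _ = (j - 1) % n := by rw [this]
end

section
/- For every sample S = (P, N) of finitely many ultimately periodic words over 2^𝒫 with P and N disjoint, there exists an LTL formula φ consistent with S, i.e., α ⊨ φ for all α ∈ P and β ⊭ φ for all β ∈ N. -/
inductive LTL (P : Type*) where
  | atom : P → LTL P
  | not : LTL P → LTL P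
  | or : LTL P → LTL P → LTL P
  | next : LTL P → LTL P
  | untl : LTL P → LTL P → LTL P

/-- Satisfaction of an LTL formula at position `i` of the infinite word `w`. -/
def SatAt {P : Type*} (w : ℕ → Set P) : ℕ → LTL P → Prop
  | i, .atom p => p ∈ w i
  | i, .not φ => ¬ SatAt w i φ
  | i, .or φ ψ => SatAt w i φ ∨ SatAt w i ψ
  | i, .next φ => SatAt w (i + 1) φ
  | i, .untl φ ψ => ∃ j, i ≤ j ∧ SatAt w j ψ ∧ ∀ t, i ≤ t → t < j → SatAt w t φ

/-- Iterated next. -/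
def nextN {P : Type*} : ℕ → LTL P → LTL P
  | 0, φ => φ
  | n + 1, φ => .next (nextN n φ)

lemma satAt_nextN {P : Type*} (w : ℕ → Set P) (i n : ℕ) (φ : LTL P) :
    SatAt w i (nextN n φ) ↔ SatAt w (i + n) φ := by
  induction n generalizing i with
  | zero => rfl
  | succ n ih =>
    show SatAt w (i + 1) (nextN n φ) ↔ _
    rw [ih]
    ring_nf

/-- Conjunction via de Morgan. -/
def LTL.and {P : Type*} (φ ψ : LTL P) : LTL P := .not (.or (.not φ) (.not ψ))

lemma satAt_and {P : Type*} (w : ℕ → Set P) (i : ℕ) (φ ψ : LTL P) :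
    SatAt w i (φ.and ψ) ↔ SatAt w i φ ∧ SatAt w i ψ := by
  simp only [LTL.and, SatAt]
  tauto

lemma distinguish {P : Type*} (α β : ℕ → Set P) (h : α ≠ β) :
    ∃ φ : LTL P, SatAt α 0 φ ∧ ¬ SatAt β 0 φ := by
  have : ∃ n, α n ≠ β n := by
    by_contra hc
    push_neg at hc
    exact h (funext hc)
  obtain ⟨n, hn⟩ := this
  have : ∃ p, (p ∈ α n ∧ p ∉ β n) ∨ (p ∉ α n ∧ p ∈ β n) := by
    by_contra hc
    push_neg at hc
    apply hn
    ext p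
    have := hc p
    tauto
  obtain ⟨p, hp | hp⟩ := this
  · refine ⟨nextN n (.atom p), ?_, ?_⟩ <;>
      simp only [satAt_nextN, Nat.zero_add, SatAt] <;> tauto
  · refine ⟨nextN n (.not (.atom p)), ?_, ?_⟩ <;>
      simp only [satAt_nextN, Nat.zero_add, SatAt] <;> tauto

/-- Separate one word `α` from a finite set `T` of words different from it. -/
lemma sep_from_finite {P : Type*} [Nonempty P] (α : ℕ → Set P) (T : Set (ℕ → Set P))
    (hT : T.Finite) (hne : ∀ β ∈ T, α ≠ β) :
    ∃ φ : LTL P, SatAt α 0 φ ∧ ∀ β ∈ T, ¬ SatAt β 0 φ := by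
  revert hne
  refine Set.Finite.induction_on _ hT ?_ ?_
  · intro _
    exact ⟨.or (.atom (Classical.arbitrary (PLift P) |>.down)) (.not (.atom (Classical.arbitrary (PLift P) |>.down))), by simp [SatAt]; tauto, by simp⟩
  · intro β T hβT hTfin ih hne
    obtain ⟨φ, hφα, hφT⟩ := ih (fun γ hγ => hne γ (Set.mem_insert_of_mem _ hγ))
    obtain ⟨ψ, hψα, hψβ⟩ := distinguish α β (hne β (Set.mem_insert _ _))
    refine ⟨φ.and ψ, (satAt_and ..).mpr ⟨hφα, hψα⟩, ?_⟩
    rintro γ (rfl | hγ) h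
    · exact hψβ ((satAt_and ..).mp h).2
    · exact hφT γ hγ ((satAt_and ..).mp h).1

theorem consistent_formula_exists {P : Type*} [Fintype P] [Nonempty P]
    (Pos Neg : Set (ℕ → Set P)) (hPfin : Pos.Finite) (hNfin : Neg.Finite)
    (hdisj : Disjoint Pos Neg)
    (hup : ∀ w ∈ Pos ∪ Neg, ∃ (u v : List (Set P)) (hv : v ≠ []), w = upWord u v hv) :
    ∃ φ : LTL P, (∀ α ∈ Pos, SatAt α 0 φ) ∧ (∀ β ∈ Neg, ¬ SatAt β 0 φ) := by
  clear hup
  revert hdisj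
  refine Set.Finite.induction_on _ hPfin ?_ ?_
  · intro _
    refine ⟨.not (.or (.atom (Classical.arbitrary (PLift P) |>.down)) (.not (.atom (Classical.arbitrary (PLift P) |>.down)))), by simp, ?_⟩
    intro β _ h
    simp only [SatAt] at h
    tauto
  · intro α Pos hαPos hPos ih hdisj
    have hd : Disjoint Pos Neg :=
      hdisj.mono_left (Set.subset_insert _ _)
    obtain ⟨φ, hφP, hφN⟩ := ih hd
    have hαne : ∀ β ∈ Neg, α ≠ β := by
      rintro β hβ rfl
      exact hdisj.ne_of_mem (Set.mem_insert _ _) hβ rfl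
    obtain ⟨ψ, hψα, hψN⟩ := sep_from_finite α Neg hNfin hαne
    refine ⟨.or φ ψ, ?_, ?_⟩
    · rintro γ (rfl | hγ)
      · exact Or.inr hψα
      · exact Or.inl (hφP γ hγ)
    · rintro β hβ (h | h)
      · exact hφN β hβ h
      · exact hψN β hβ h
end
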